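/- Let a, b₀ > 0, c ∈ ℝ, and q ≥ 0. Define g : ℝ → ℝ by g(α) = ( a(a + 2b₀α)/(a + b₀α) ) · ( q − (1/2)( c/a + (b₀α² + c)/(a + 2b₀α) ) ), and set α* := ( −a + √(a(a + 2b₀q)) )/b₀. Then α* ∈ [0, q], g(α) ≤ g(α*) for every α ∈ [0, q], and g(α*) = 2aq − c + a²/b₀ − (1/b₀)√( a³(a + 2b₀q) ). -/

import Mathlib

/-- Optimizing the homogenized linearization `g(α) = L̄_α(q)` of the one-dimensional
quadratic operator over the control `α ∈ [0,q]`: the maximizer is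
`α* = (−a + √(a(a + 2b₀q)))/b₀`, and the optimal value is
`2aq − c + a²/b₀ − (1/b₀)√(a³(a + 2b₀q))`. -/
theorem stmt_14 (a b₀ c q : ℝ) (ha : 0 < a) (hb₀ : 0 < b₀) (hq : 0 ≤ q)
    (g : ℝ → ℝ)
    (hg : ∀ α : ℝ, g α = (a * (a + 2 * b₀ * α) / (a + b₀ * α)) *
      (q - (1/2) * (c / a + (b₀ * α ^ 2 + c) / (a + 2 * b₀ * α))))
    (αstar : ℝ) (hαstar : αstar = (-a + Real.sqrt (a * (a + 2 * b₀ * q))) / b₀) :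
    αstar ∈ Set.Icc 0 q ∧ (∀ α ∈ Set.Icc 0 q, g α ≤ g αstar) ∧
      g αstar = 2 * a * q - c + a ^ 2 / b₀ -
        (1 / b₀) * Real.sqrt (a ^ 3 * (a + 2 * b₀ * q)) := by
  set s := Real.sqrt (a * (a + 2 * b₀ * q)) with hs_def
  have harg : (0:ℝ) ≤ a * (a + 2 * b₀ * q) := by positivity
  have hs0 : 0 ≤ s := Real.sqrt_nonneg _
  have hss : s ^ 2 = a * (a + 2 * b₀ * q) := Real.sq_sqrt harg
  have hsa : a ≤ s := by
    have h := Real.sqrt_le_sqrt (show a ^ 2 ≤ a * (a + 2 * b₀ * q) by nlinarith [mul_nonneg (mul_pos ha hb₀).le hq])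
    rwa [Real.sqrt_sq ha.le] at h
  have hspos : 0 < s := lt_of_lt_of_le ha hsa
  have hsq : s ≤ a + b₀ * q := by nlinarith [sq_nonneg (b₀ * q)]
  have hmem : αstar ∈ Set.Icc 0 q := by
    constructor
    · rw [hαstar]
      apply div_nonneg _ hb₀.le; linarith
    · rw [hαstar, div_le_iff₀ hb₀]; linarith
  -- closed form for g
  have hform : ∀ α : ℝ, 0 ≤ α →
      g α = 2 * a * q - c + a ^ 2 / b₀ -
        a * ((a + b₀ * α) ^ 2 + s ^ 2) / (2 * b₀ * (a + b₀ * α)) := by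
    intro α hα
    have hu : (0:ℝ) < a + b₀ * α := by nlinarith [mul_nonneg hb₀.le hα]
    have hu2 : (0:ℝ) < a + 2 * b₀ * α := by nlinarith [mul_nonneg hb₀.le hα]
    rw [hg, hss]
    field_simp
    ring
  have hustar : a + b₀ * αstar = s := by
    rw [hαstar]; field_simp; ring
  have hαstar0 : (0:ℝ) ≤ αstar := hmem.1
  have hval : g αstar = 2 * a * q - c + a ^ 2 / b₀ - (1 / b₀) * (a * s) := by
    rw [hform αstar hαstar0, hustar]
    have : a * (s ^ 2 + s ^ 2) / (2 * b₀ * s) = (1 / b₀) * (a * s) := by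
      field_simp; ring
    rw [this]
  have hsqrt3 : Real.sqrt (a ^ 3 * (a + 2 * b₀ * q)) = a * s := by
    have h3 : a ^ 3 * (a + 2 * b₀ * q) = a ^ 2 * (a * (a + 2 * b₀ * q)) := by ring
    rw [h3, Real.sqrt_mul (sq_nonneg a), Real.sqrt_sq ha.le]
  refine ⟨hmem, ?_, ?_⟩
  · intro α hα
    have hu : (0:ℝ) < a + b₀ * α := by nlinarith [mul_nonneg hb₀.le hα.1]
    rw [hform α hα.1, hval, sub_le_sub_iff_left,
      show (1/b₀) * (a*s) = (a*s)/b₀ by ring,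
      div_le_div_iff₀ hb₀ (mul_pos (by linarith : (0:ℝ) < 2 * b₀) hu)]
    nlinarith [mul_nonneg (mul_pos ha hb₀).le (sq_nonneg ((a + b₀ * α) - s))]
  · rw [hval, hsqrt3]
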